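/- Brown factorization lemma via path objects, 1-categorical version: let F : A ⟶ C be any functor between small groupoids. Then F factors as F = H ∘ G where G : A ⟶ B is fully faithful, essentially surjective, injective on objects, and admits a retraction P : B ⟶ A with P ∘ G = id which is a fully faithful essentially surjective isofibration, and H : B ⟶ C is an isofibration. (Take B to be the pullback of the source projection of the arrow groupoid C^I along F.) -/

import Mathlib

open CategoryTheory

/-- A functor is an isofibration: every arrow into the image of an object lifts. -/
def IsIsofib {B C : Type*} [Category B] [Category C] (F : B ⥤ C) : Prop :=
  ∀ (b : B) (c : C) (γ : c ⟶ F.obj b),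
    ∃ (b' : B) (β : b' ⟶ b) (h : F.obj b' = c), F.map β = eqToHom h ≫ γ

variable {A C : Type*} [Groupoid A] [Groupoid C] (F : A ⥤ C)

/-- The strict pullback of the source projection of the arrow groupoid `C^I` along `F`,
realized as the comma category `F ↓ 𝟭 C` (objects: `a : A`, `c : C`, `f : F a ⟶ c`). -/
abbrev PathFactor := Comma F (𝟭 C)

/-- The functor `G : A ⥤ B` induced by `id_A` and the constant path on `F a`. -/
def pathInto : A ⥤ PathFactor F where
  obj a := { left := a, right := F.obj a, hom := 𝟙 (F.obj a) }
  map u := { left := u, right := F.map u, w := by simp }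

/-- The retraction `P : B ⥤ A`. -/
def pathRetr : PathFactor F ⥤ A := Comma.fst F (𝟭 C)

/-- The fibration `H : B ⥤ C`, evaluation at the target of the path. -/
def pathTgt : PathFactor F ⥤ C := Comma.snd F (𝟭 C)

theorem stmt_15 :
    pathInto F ⋙ pathTgt F = F ∧
    (pathInto F).Full ∧ (pathInto F).Faithful ∧ (pathInto F).EssSurj ∧
    Function.Injective (pathInto F).obj ∧
    pathInto F ⋙ pathRetr F = 𝟭 A ∧
    (pathRetr F).Full ∧ (pathRetr F).Faithful ∧ (pathRetr F).EssSurj ∧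
    IsIsofib (pathRetr F) ∧
    IsIsofib (pathTgt F) := by
  refine ⟨rfl, ?_, ?_, ?_, ?_, rfl, ?_, ?_, ?_, ?_, ?_⟩
  · exact ⟨fun {a a'} φ => ⟨φ.left, by
      ext
      · rfl
      · have := φ.w
        simp [pathInto] at this ⊢
        exact this⟩⟩
  · exact ⟨fun {a a'} {u v} h => congrArg CommaMorphism.left h⟩
  · refine ⟨fun X => ⟨X.left, ⟨Comma.isoMk (Iso.refl _) { hom := X.hom, inv := Groupoid.inv X.hom, hom_inv_id := Groupoid.comp_inv _, inv_hom_id := Groupoid.inv_comp _ } ?_⟩⟩⟩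
    simp [pathInto]
  · intro a a' h
    exact congrArg Comma.left h
  · exact ⟨fun {X Y} u => ⟨⟨u, Groupoid.inv X.hom ≫ F.map u ≫ Y.hom, by simp; rfl⟩, rfl⟩⟩
  · refine ⟨fun {X Y} {φ ψ} h => ?_⟩
    ext
    · exact h
    · have hφ : F.map φ.left ≫ Y.hom = X.hom ≫ φ.right := by simpa using φ.w.symm
      have hψ : F.map ψ.left ≫ Y.hom = X.hom ≫ ψ.right := by simpa using ψ.w.symm
      have : X.hom ≫ φ.right = X.hom ≫ ψ.right := by
        rw [← hφ, ← hψ]; exact congrArg (fun x => F.map x ≫ Y.hom) h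
      exact (cancel_epi X.hom).mp this
  · exact ⟨fun a => ⟨(pathInto F).obj a, ⟨Iso.refl _⟩⟩⟩
  · intro b a γ
    exact ⟨⟨a, b.right, F.map γ ≫ b.hom⟩, ⟨γ, 𝟙 b.right, by simp; rfl⟩, rfl, by simp [pathRetr]; exact (Category.id_comp γ).symm⟩
  · intro b c γ
    exact ⟨⟨b.left, c, b.hom ≫ Groupoid.inv γ⟩, ⟨𝟙 b.left, γ, by simp; exact ((congrArg (b.hom ≫ ·) (Groupoid.inv_comp γ)).trans (Category.comp_id _)).symm⟩, rfl, by simp [pathTgt]; exact (Category.id_comp γ).symm⟩
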